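/- Let R be a Prüfer domain of finite Krull dimension. Then R is radically finite if and only if R is a Dedekind domain whose ideal class group is torsion (every element of the ideal class group has finite order). -/

import Mathlib

open scoped nonZeroDivisors

/-- The height of an ideal `I`: the infimum of the heights (in the prime spectrum)
of the prime ideals containing `I`. -/
noncomputable def idealHeight (R : Type*) [CommRing R] (I : Ideal R) : ℕ∞ :=
  ⨅ P : {P : PrimeSpectrum R // I ≤ P.asIdeal}, Order.height P.1

/-- An ideal `I` is radically perfect if its height equals the least number `n` such that
`√I` is the radical of an ideal generated by `n` elements, and moreover, if `ht I = 0`,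
then `√I` is the radical of a principal ideal generated by a zero divisor. -/
def RadicallyPerfect {R : Type*} [CommRing R] (I : Ideal R) : Prop :=
  idealHeight R I = sInf {n : ℕ∞ | ∃ s : Finset R,
      (s.card : ℕ∞) = n ∧ (Ideal.span (s : Set R)).radical = I.radical} ∧
    (idealHeight R I = 0 → ∃ θ : R, θ ∉ nonZeroDivisors R ∧
      I.radical = (Ideal.span {θ} : Ideal R).radical)

/-- The set of ideals of `R` generated by `ht P` elements whose radical equals `P`. -/
def genHtRad {R : Type*} [CommRing R] (P : Ideal R) : Set (Ideal R) :=
  {A | ∃ s : Finset R, (s.card : ℕ∞) = idealHeight R P ∧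
    Ideal.span (s : Set R) = A ∧ A.radical = P}

/-- A commutative ring `R` is radically finite if every prime ideal `P` of `R` is radically
perfect, the set of ideals generated by `ht P` elements with radical `P` has a maximal
member `A`, and every chain of ideals between `A` and `P` is finite. -/
def RadicallyFinite (R : Type*) [CommRing R] : Prop :=
  ∀ P : Ideal R, P.IsPrime → RadicallyPerfect P ∧
    ∃ A ∈ genHtRad P, (∀ B ∈ genHtRad P, A ≤ B → B = A) ∧
      ∀ C : Set (Ideal R), IsChain (· ≤ ·) C → C ⊆ Set.Icc A P → C.Finite

/-- A ring is of finite character if each nonzero element lies in only finitely many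
maximal ideals. -/
def FiniteCharacter (R : Type*) [CommRing R] : Prop :=
  ∀ x : R, x ≠ 0 → {M : Ideal R | M.IsMaximal ∧ x ∈ M}.Finite

/-- A Prüfer domain: every nonzero finitely generated ideal is invertible
(as a fractional ideal in the fraction field). -/
def IsPruferDomain (R : Type*) [CommRing R] [IsDomain R] : Prop :=
  ∀ I : Ideal R, I.FG → I ≠ ⊥ →
    IsUnit (I : FractionalIdeal (nonZeroDivisors R) (FractionRing R))

section AuxLemmas

variable {R : Type*} [CommRing R]

/-- Cohen's theorem: a commutative ring in which every prime ideal is finitely generated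
is Noetherian. -/
theorem cohenAux (h : ∀ P : Ideal R, P.IsPrime → P.FG) : IsNoetherianRing R := by
  classical
  rw [isNoetherianRing_iff, isNoetherian_def]
  by_contra hc
  push_neg at hc
  obtain ⟨I0, hI0⟩ := hc
  obtain ⟨M, hM⟩ : ∃ M, Maximal (· ∈ {I : Ideal R | ¬ I.FG}) M := by
    apply zorn_le₀
    intro c hcS hchain
    rcases c.eq_empty_or_nonempty with rfl | hne
    · exact ⟨I0, hI0, by simp⟩
    refine ⟨sSup c, ?_, fun z hz => le_sSup hz⟩
    intro hfg
    obtain ⟨T, hT⟩ := hfg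
    obtain ⟨J, hJc, hJle⟩ := (CompleteLattice.isCompactElement_iff_le_of_directed_sSup_le (Ideal R) _).mp
      (Submodule.finset_span_isCompactElement T) c hne hchain.directedOn (le_of_eq hT)
    have hJeq : Ideal.span (T : Set R) = J :=
      le_antisymm hJle (by rw [hT]; exact le_sSup hJc)
    exact hcS hJc ⟨T, hJeq⟩
  have hMnfg : ¬ M.FG := hM.1
  have hMne : M ≠ ⊤ := by
    rintro rfl
    exact hMnfg ⟨{1}, by simp⟩
  have hMprime : M.IsPrime := by
    refine ⟨hMne, ?_⟩
    intro a b hab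
    by_contra hcon
    push_neg at hcon
    obtain ⟨ha, hb⟩ := hcon
    have hM'fg : (M ⊔ Ideal.span {a}).FG := by
      by_contra h'
      have := hM.2 h' le_sup_left
      exact ha (this (Ideal.mem_sup_right (Ideal.mem_span_singleton_self a)))
    set N : Ideal R := M.colon (Ideal.span {a}) with hN
    have hMN : M ≤ N := fun x hx => Ideal.mem_colon_span_singleton.mpr (Ideal.mul_mem_right a M hx)
    have hbN : b ∈ N := Ideal.mem_colon_span_singleton.mpr (by rwa [mul_comm])
    have hNfg : N.FG := by
      by_contra h'
      exact hb (hM.2 h' hMN hbN)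
    obtain ⟨T, hT⟩ := hM'fg
    have hdec : ∀ g : R, g ∈ (T : Set R) → ∃ m ∈ M, ∃ c : R, m + c * a = g := by
      intro g hg
      have hgM' : g ∈ M ⊔ Ideal.span {a} := hT ▸ Ideal.subset_span hg
      rw [Submodule.mem_sup] at hgM'
      obtain ⟨m, hm, z, hz, hmz⟩ := hgM'
      rw [Ideal.mem_span_singleton'] at hz
      obtain ⟨c, hc⟩ := hz
      exact ⟨m, hm, c, by rw [hc]; exact hmz⟩
    choose! mF hmF cF hsum using hdec
    have key : M = Ideal.span ((T.image mF : Finset R) : Set R) ⊔ Ideal.span {a} * N := by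
      apply le_antisymm
      · intro x hx
        have hx' : x ∈ Ideal.span (T : Set R) := by
          rw [hT]; exact le_sup_left (α := Ideal R) hx
        rw [← Ideal.submodule_span_eq, Submodule.mem_span_finset] at hx'
        obtain ⟨f, -, hf⟩ := hx'
        set y := ∑ g ∈ T, f g * mF g with hy
        have hyM : y ∈ M := Ideal.sum_mem _ fun g hg => Ideal.mul_mem_left _ _ (hmF g hg)
        have hyspan : y ∈ Ideal.span ((T.image mF : Finset R) : Set R) :=
          Ideal.sum_mem _ fun g hg => Ideal.mul_mem_left _ _
            (Ideal.subset_span (Finset.mem_coe.mpr (Finset.mem_image_of_mem mF hg)))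
        set c := ∑ g ∈ T, f g * cF g with hcdef
        have hxyc : x = y + c * a := by
          rw [← hf]
          calc ∑ g ∈ T, f g • g = ∑ g ∈ T, (f g * mF g + f g * cF g * a) :=
                Finset.sum_congr rfl (fun g hg => by
                  have e : mF g + cF g * a = g := hsum g hg
                  calc f g • g = f g * (mF g + cF g * a) := by rw [smul_eq_mul, e]
                    _ = f g * mF g + f g * cF g * a := by ring)
            _ = y + c * a := by rw [Finset.sum_add_distrib, Finset.sum_mul]
        have hcaM : c * a ∈ M := by
          have : c * a = x - y := by rw [hxyc]; ring
          rw [this]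
          exact Ideal.sub_mem _ hx hyM
        have hcN : c ∈ N := Ideal.mem_colon_span_singleton.mpr hcaM
        rw [hxyc]
        refine Submodule.add_mem _ (Ideal.mem_sup_left hyspan) (Ideal.mem_sup_right ?_)
        rw [mul_comm (Ideal.span ({a} : Set R)) N]
        exact Ideal.mul_mem_mul hcN (Ideal.mem_span_singleton_self a)
      · apply sup_le
        · rw [Ideal.span_le]
          intro z hz
          simp only [Finset.coe_image, Set.mem_image, Finset.mem_coe] at hz
          obtain ⟨g, hg, rfl⟩ := hz
          exact hmF g hg
        · rw [Ideal.mul_le]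
          intro u hu v hv
          rw [Ideal.mem_span_singleton'] at hu
          obtain ⟨e, rfl⟩ := hu
          have hva : v * a ∈ M := Ideal.mem_colon_span_singleton.mp hv
          have : e * a * v = e * (v * a) := by ring
          rw [this]
          exact Ideal.mul_mem_left M e hva
    apply hMnfg
    rw [key]
    exact Submodule.FG.sup ⟨T.image mF, rfl⟩
      (Submodule.FG.mul (Submodule.fg_span_singleton a) hNfg)
  exact hMnfg (h M hMprime)

theorem isMin_of_asIdeal_bot [IsDomain R] {x : PrimeSpectrum R} (hx : x.asIdeal = ⊥) :
    IsMin x := by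
  intro y hy
  rw [← PrimeSpectrum.asIdeal_le_asIdeal] at hy ⊢
  rw [hx] at hy ⊢
  exact le_bot_iff.mp hy ▸ le_rfl

theorem idealHeight_bot_of_domain (R : Type*) [CommRing R] [IsDomain R] :
    idealHeight R (⊥ : Ideal R) = 0 := by
  apply le_antisymm _ zero_le
  refine le_trans (iInf_le _ ⟨⟨⊥, Ideal.bot_prime⟩, bot_le⟩) ?_
  exact le_of_eq (Order.height_eq_zero.mpr (isMin_of_asIdeal_bot rfl))

theorem height_eq_one_of_ne_bot [IsDomain R] [Ring.DimensionLEOne R]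
    (x : PrimeSpectrum R) (hx : x.asIdeal ≠ ⊥) : Order.height x = 1 := by
  apply le_antisymm
  · rw [show (1 : ℕ∞) = ((1 : ℕ) : ℕ∞) by simp, Order.height_le_coe_iff]
    intro y hy
    have hybot : y.asIdeal = ⊥ := by
      by_contra hyb
      have hymax : y.asIdeal.IsMaximal := y.2.isMaximal hyb
      have hlt : y.asIdeal < x.asIdeal := (PrimeSpectrum.asIdeal_lt_asIdeal _ _).mpr hy
      have := hymax.eq_of_le x.2.ne_top hlt.le
      exact hlt.ne this
    have : Order.height y = 0 := Order.height_eq_zero.mpr (isMin_of_asIdeal_bot hybot)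
    rw [this]
    exact_mod_cast zero_lt_one
  · have hlt : (⟨⊥, Ideal.bot_prime⟩ : PrimeSpectrum R) < x := by
      rw [← PrimeSpectrum.asIdeal_lt_asIdeal]
      exact bot_lt_iff_ne_bot.mpr hx
    rw [ENat.one_le_iff_ne_zero]
    intro h0
    have hmin : IsMin x := Order.height_eq_zero.mp h0
    exact hlt.not_ge (hmin hlt.le)

theorem idealHeight_eq_one_of_prime [IsDomain R] [Ring.DimensionLEOne R]
    {P : Ideal R} (hP : P.IsPrime) (hP0 : P ≠ ⊥) : idealHeight R P = 1 := by
  apply le_antisymm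
  · exact le_trans (iInf_le _ ⟨⟨P, hP⟩, le_rfl⟩) (height_eq_one_of_ne_bot _ hP0).le
  · refine le_iInf fun Q => ?_
    have hQ0 : Q.1.asIdeal ≠ ⊥ := fun h => hP0 (le_bot_iff.mp (h ▸ Q.2))
    exact (height_eq_one_of_ne_bot Q.1 hQ0).ge

/-- In a Dedekind domain, the ideals between `P^d` and a nonzero prime `P` are
exactly the powers `P^k` for `1 ≤ k ≤ d`. -/
theorem pow_interval {R : Type*} [CommRing R] [IsDomain R] [IsDedekindDomain R]
    {P B : Ideal R} (hP : P.IsPrime) (hP0 : P ≠ ⊥) {d : ℕ}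
    (h1 : P ^ d ≤ B) (h2 : B ≤ P) : ∃ k, 1 ≤ k ∧ k ≤ d ∧ B = P ^ k := by
  have hprime : Prime P := (Ideal.prime_iff_isPrime hP0).mpr hP
  have hdvd : B ∣ P ^ d := Ideal.dvd_iff_le.mpr h1
  obtain ⟨k, hkd, hassoc⟩ := (dvd_prime_pow hprime d).mp hdvd
  have hBk : B = P ^ k := associated_iff_eq.mp hassoc
  refine ⟨k, ?_, hkd, hBk⟩
  rcases Nat.eq_zero_or_pos k with rfl | hk
  · rw [pow_zero, Ideal.one_eq_top] at hBk
    exact absurd (top_le_iff.mp (hBk ▸ h2 : (⊤ : Ideal R) ≤ P)) hP.ne_top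
  · exact hk

end AuxLemmas

/-- A Prüfer domain of finite Krull dimension is radically finite if and only if it is
a Dedekind domain with torsion ideal class group. -/
theorem prufer_radicallyFinite_iff {R : Type*} [CommRing R] [IsDomain R]
    (hpr : IsPruferDomain R) (hdim : ringKrullDim R < ⊤) :
    RadicallyFinite R ↔ IsDedekindDomain R ∧ Monoid.IsTorsion (ClassGroup R) := by
  constructor
  · intro hrf
    -- every prime ideal is finitely generated
    have hfg : ∀ P : Ideal R, P.IsPrime → P.FG := by
      intro P hP
      obtain ⟨_, A, ⟨s, hcard, hspan, hrad⟩, hmaxA, hchain⟩ := hrf P hP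
      have hAfg : A.FG := ⟨s, hspan⟩
      have hAP : A ≤ P := hrad ▸ Ideal.le_radical
      obtain ⟨m, hm⟩ : ∃ m, Maximal (· ∈ {J : Ideal R | A ≤ J ∧ J ≤ P ∧ J.FG}) m := by
        apply zorn_le₀
        intro c hcS hchain'
        rcases c.eq_empty_or_nonempty with rfl | hne
        · exact ⟨A, ⟨le_rfl, hAP, hAfg⟩, by simp⟩
        · have hfin : c.Finite := hchain c hchain' (fun J hJ => ⟨(hcS hJ).1, (hcS hJ).2.1⟩)
          obtain ⟨m, hmc, hmax'⟩ := Set.Finite.exists_maximal hfin hne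
          refine ⟨m, hcS hmc, fun z hz => ?_⟩
          rcases hchain'.total hz hmc with h | h
          · exact h
          · exact hmax' hz h
      obtain ⟨hAm, hmP, hmfg⟩ := hm.1
      rcases eq_or_lt_of_le hmP with rfl | hlt
      · exact hmfg
      · obtain ⟨x, hxP, hxm⟩ := SetLike.exists_of_lt hlt
        have hmem : m ⊔ Ideal.span {x} ∈ {J : Ideal R | A ≤ J ∧ J ≤ P ∧ J.FG} :=
          ⟨le_trans hAm le_sup_left,
           sup_le hlt.le (Ideal.span_le.mpr (Set.singleton_subset_iff.mpr hxP)),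
           Submodule.FG.sup hmfg (Submodule.fg_span_singleton x)⟩
        have h2 := hm.2 hmem le_sup_left
        exact absurd (h2 (Ideal.mem_sup_right (Ideal.mem_span_singleton_self x))) hxm
    have hnoeth : IsNoetherianRing R := cohenAux hfg
    have hdd : IsDedekindDomain R := by
      have hinv : ∀ I ≠ (⊥ : FractionalIdeal R⁰ (FractionRing R)), I * I⁻¹ = 1 := by
        intro I hI
        obtain ⟨a, J, ha, hIJ⟩ := FractionalIdeal.exists_eq_spanSingleton_mul I
        have hJ0 : J ≠ ⊥ := by
          rintro rfl
          apply hI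
          rw [hIJ]
          simp
        have hJu : IsUnit (J : FractionalIdeal (nonZeroDivisors R) (FractionRing R)) :=
          hpr J (IsNoetherian.noetherian J) hJ0
        have hx : (algebraMap R (FractionRing R) a) ≠ 0 := fun h =>
          ha (IsFractionRing.to_map_eq_zero_iff.mp h)
        have hsu : IsUnit (FractionalIdeal.spanSingleton (nonZeroDivisors R)
            (algebraMap R (FractionRing R) a)⁻¹) := by
          apply IsUnit.of_mul_eq_one
            (FractionalIdeal.spanSingleton (nonZeroDivisors R) (algebraMap R (FractionRing R) a))
          rw [FractionalIdeal.spanSingleton_mul_spanSingleton, inv_mul_cancel₀ hx,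
            FractionalIdeal.spanSingleton_one]
        rw [FractionalIdeal.mul_inv_cancel_iff_isUnit (FractionRing R)]
        rw [hIJ]
        exact hsu.mul hJu
      exact isDedekindDomain_iff_mul_inv_cancel.mpr hinv
    refine ⟨hdd, ?_⟩
    -- torsion class group
    have hprime_tor : ∀ (p : Ideal R) (hp : p ∈ (Ideal R)⁰), p.IsPrime →
        IsOfFinOrder (ClassGroup.mk0 ⟨p, hp⟩) := by
      intro p hpmem hprime
      have hp0 : p ≠ ⊥ := mem_nonZeroDivisors_iff_ne_zero.mp hpmem
      obtain ⟨_, A, ⟨s, hcard, hspan, hrad⟩, -, -⟩ := hrf p hprime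
      have hht : idealHeight R p = 1 := idealHeight_eq_one_of_prime hprime hp0
      rw [hht] at hcard
      have hcard1 : s.card = 1 := by exact_mod_cast hcard
      obtain ⟨θ, rfl⟩ := Finset.card_eq_one.mp hcard1
      obtain ⟨n, hn⟩ := Ideal.exists_radical_pow_le_of_fg A (IsNoetherian.noetherian _)
      rw [hrad] at hn
      have hAp : A ≤ p := hrad ▸ Ideal.le_radical
      obtain ⟨k, hk1, hkn, hAk⟩ := pow_interval hprime hp0 hn hAp
      have hprin : (p ^ k).IsPrincipal :=
        ⟨⟨θ, by rw [← hAk, ← hspan, Finset.coe_singleton, Ideal.submodule_span_eq]⟩⟩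
      have hpk : p ^ k ∈ (Ideal R)⁰ := pow_mem hpmem k
      have hmk : (ClassGroup.mk0 ⟨p, hpmem⟩) ^ k = 1 := by
        have h1 : ClassGroup.mk0 ⟨p ^ k, hpk⟩ = 1 := (ClassGroup.mk0_eq_one_iff hpk).mpr hprin
        rw [show (⟨p ^ k, hpk⟩ : (Ideal R)⁰) = ⟨p, hpmem⟩ ^ k from rfl,
          MonoidHom.map_pow ClassGroup.mk0] at h1
        exact h1
      exact isOfFinOrder_iff_pow_eq_one.mpr ⟨k, hk1, hmk⟩
    intro g
    obtain ⟨⟨I, hI⟩, rfl⟩ := ClassGroup.mk0_surjective g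
    revert hI
    refine UniqueFactorizationMonoid.induction_on_prime
      (P := fun I : Ideal R => ∀ hI : I ∈ (Ideal R)⁰, IsOfFinOrder (ClassGroup.mk0 ⟨I, hI⟩))
      I ?_ ?_ ?_
    · intro h0
      exact absurd (mem_nonZeroDivisors_iff_ne_zero.mp h0) (by simp)
    · intro u hu hmem
      have hu' : u = ⊤ := Ideal.isUnit_iff.mp hu
      subst hu'
      have hprin : Submodule.IsPrincipal (⊤ : Ideal R) :=
        ⟨⟨1, by rw [Ideal.submodule_span_eq, Ideal.span_singleton_one]⟩⟩
      have : ClassGroup.mk0 ⟨(⊤ : Ideal R), hmem⟩ = 1 :=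
        (ClassGroup.mk0_eq_one_iff hmem).mpr hprin
      rw [this]
      exact IsOfFinOrder.one
    · intro a p ha hp ih hmem
      have hpmem : p ∈ (Ideal R)⁰ := mem_nonZeroDivisors_of_ne_zero hp.ne_zero
      have hamem : a ∈ (Ideal R)⁰ := mem_nonZeroDivisors_of_ne_zero ha
      rw [show (⟨p * a, hmem⟩ : (Ideal R)⁰) = ⟨p, hpmem⟩ * ⟨a, hamem⟩ from rfl,
        MonoidHom.map_mul ClassGroup.mk0]
      exact (Commute.all _ _).isOfFinOrder_mul
        (hprime_tor p hpmem (Ideal.isPrime_of_prime hp)) (ih hamem)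
  · rintro ⟨hdd, htor⟩
    intro P hP
    by_cases hP0 : P = ⊥
    · subst hP0
      have hh : idealHeight R (⊥ : Ideal R) = 0 := idealHeight_bot_of_domain R
      constructor
      · constructor
        · rw [hh]
          symm
          apply le_antisymm _ zero_le
          apply sInf_le
          exact ⟨∅, by simp, by simp⟩
        · intro _
          exact ⟨0, zero_notMem_nonZeroDivisors, by rw [Ideal.span_singleton_eq_bot.mpr rfl]⟩
      · refine ⟨⊥, ⟨∅, by simp [hh], by simp, by simp⟩, ?_, ?_⟩
        · rintro B ⟨s, hcard, hspan, hrad⟩ -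
          rw [hh] at hcard
          have : s = ∅ := Finset.card_eq_zero.mp (by exact_mod_cast hcard)
          subst this
          simp only [Finset.coe_empty, Ideal.span_empty] at hspan
          exact hspan.symm
        · intro C hC hsub
          rw [Set.Icc_self] at hsub
          exact (Set.finite_singleton _).subset hsub
    · have hmax : P.IsMaximal := hP.isMaximal hP0
      have hPmem : P ∈ (Ideal R)⁰ := mem_nonZeroDivisors_of_ne_zero hP0
      set g := ClassGroup.mk0 ⟨P, hPmem⟩ with hg
      have hfin : IsOfFinOrder g := htor g
      set d := orderOf g with hd
      have hd0 : 0 < d := hfin.orderOf_pos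
      have hgd : g ^ d = 1 := pow_orderOf_eq_one g
      have hmemd : P ^ d ∈ (Ideal R)⁰ := pow_mem hPmem d
      have hPdprin : (P ^ d).IsPrincipal := by
        apply (ClassGroup.mk0_eq_one_iff hmemd).mp
        rw [show (⟨P ^ d, hmemd⟩ : (Ideal R)⁰) = ⟨P, hPmem⟩ ^ d from rfl,
          MonoidHom.map_pow ClassGroup.mk0]
        exact hgd
      obtain ⟨θ, hθ⟩ := hPdprin.principal
      have hht : idealHeight R P = 1 := idealHeight_eq_one_of_prime hP hP0
      have hradPd : (P ^ d).radical = P := by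
        have h := Ideal.radical_pow (I := P) (n := d) hd0.ne'
        rw [hP.radical] at h
        exact h
      have hθspan : Ideal.span ({θ} : Set R) = P ^ d := by
        rw [hθ]
      -- the key: mk0 of P^k principal implies d ∣ k
      have hpow_eq : ∀ k : ℕ, (P ^ k).IsPrincipal → d ∣ k := by
        intro k hk
        have hpk : P ^ k ∈ (Ideal R)⁰ := pow_mem hPmem k
        have h1 : ClassGroup.mk0 ⟨P ^ k, hpk⟩ = 1 := (ClassGroup.mk0_eq_one_iff hpk).mpr hk
        rw [show (⟨P ^ k, hpk⟩ : (Ideal R)⁰) = ⟨P, hPmem⟩ ^ k from rfl,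
          MonoidHom.map_pow ClassGroup.mk0] at h1
        exact orderOf_dvd_of_pow_eq_one h1
      constructor
      · constructor
        · rw [hht]
          symm
          apply le_antisymm
          · refine sInf_le ⟨{θ}, by simp, ?_⟩
            rw [Finset.coe_singleton, hθspan, hradPd, hP.radical]
          · refine le_sInf ?_
            rintro n ⟨s, hcard, hrad'⟩
            rw [ENat.one_le_iff_ne_zero]
            intro h0
            rw [h0] at hcard
            have : s = ∅ := Finset.card_eq_zero.mp (by exact_mod_cast hcard)
            subst this
            simp only [Finset.coe_empty, Ideal.span_empty,
              Ideal.radical_bot_of_noZeroDivisors, hP.radical] at hrad'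
            exact hP0 hrad'.symm
        · intro h0
          rw [hht] at h0
          exact absurd h0 one_ne_zero
      · refine ⟨P ^ d, ⟨{θ}, by simp [hht], by rw [Finset.coe_singleton]; exact hθspan,
          hradPd⟩, ?_, ?_⟩
        · rintro B ⟨s, hcard, hspan, hrad⟩ hle
          rw [hht] at hcard
          have hcard1 : s.card = 1 := by exact_mod_cast hcard
          obtain ⟨b, rfl⟩ := Finset.card_eq_one.mp hcard1
          have hBP : B ≤ P := hrad ▸ Ideal.le_radical
          obtain ⟨k, hk1, hkd, hBk⟩ := pow_interval hP hP0 hle hBP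
          have hBprin : (P ^ k).IsPrincipal :=
            ⟨⟨b, by rw [← hBk, ← hspan, Finset.coe_singleton, Ideal.submodule_span_eq]⟩⟩
          have hdvdk : d ∣ k := hpow_eq k hBprin
          have hkd' : k = d := le_antisymm hkd (Nat.le_of_dvd hk1 hdvdk)
          rw [hBk, hkd']
        · intro C hC hsub
          have hIcc : Set.Icc (P ^ d) P ⊆ (fun k => P ^ k) '' Set.Icc 1 d := by
            rintro B ⟨h1, h2⟩
            obtain ⟨k, hk1, hkd, hBk⟩ := pow_interval hP hP0 h1 h2
            exact ⟨k, ⟨hk1, hkd⟩, hBk.symm⟩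
          exact Set.Finite.subset ((Set.finite_Icc 1 d).image _) (hsub.trans hIcc)
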